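/- Let A be a complex Banach *-algebra with identity and a, b ∈ A with generalized core-EP inverses such that a ≤^⊕ b. Then there exist projections e₁ = a a^⊕ and e₂ with e₁ e₂ = e₂ e₁ = 0 such that, writing e₃ = 1 - e₁ - e₂: e₁ a e_j = e₁ b e_j for j = 1,2,3; e₂ b e₁ = e₃ b e₁ = e₃ b e₂ = 0; e₁ b e₁ is invertible in e₁ A e₁; e₂ b e₂ is invertible in e₂ A e₂; and both (1-e₁) a (1-e₁) and e₃ b e₃ are quasinilpotent. -/
import Mathlib


open Filter Topology

variable {A : Type*} [NormedRing A] [StarRing A] [NormedAlgebra ℂ A] [StarModule ℂ A]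
  [CompleteSpace A]

/-- quasinilpotent: `lim ‖z^n‖^(1/n) = 0` -/
def IsQNil (z : A) : Prop :=
  Tendsto (fun n : ℕ => ‖z ^ n‖ ^ ((1 : ℝ) / n)) atTop (𝓝 0)

/-- generalized Drazin inverse -/
def IsGD (a x : A) : Prop :=
  a * x ^ 2 = x ∧ a * x = x * a ∧ IsQNil (a - a ^ 2 * x)

/-- generalized core-EP inverse -/
def IsGCEP (a x : A) : Prop :=
  x = a * x ^ 2 ∧ star (a * x) = a * x ∧
    Tendsto (fun n : ℕ => ‖a ^ n - x * a ^ (n + 1)‖ ^ ((1 : ℝ) / n)) atTop (𝓝 0)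

section Helpers


private lemma rootle {r : ℕ → A}
    (hr : Tendsto (fun n : ℕ => ‖r n‖ ^ ((1 : ℝ) / n)) atTop (𝓝 0))
    {ε : ℝ} (hε : 0 < ε) : ∀ᶠ n : ℕ in atTop, ‖r n‖ ≤ ε ^ n := by
  have h := hr.eventually (gt_mem_nhds hε)
  filter_upwards [h, eventually_ge_atTop 1] with n h1 h2
  have hn : (n : ℝ) ≠ 0 := by positivity
  have : ‖r n‖ = (‖r n‖ ^ ((1 : ℝ) / n)) ^ n := by
    rw [← Real.rpow_natCast (‖r n‖ ^ ((1 : ℝ) / n)) n, ← Real.rpow_mul (norm_nonneg _),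
      one_div_mul_cancel hn, Real.rpow_one]
  rw [this]
  exact pow_le_pow_left₀ (Real.rpow_nonneg (norm_nonneg _) _) h1.le n

private lemma vanish {r : ℕ → A}
    (hr : Tendsto (fun n : ℕ => ‖r n‖ ^ ((1 : ℝ) / n)) atTop (𝓝 0))
    (v : A) (c C : ℝ) (h : ∀ᶠ n : ℕ in atTop, ‖v‖ ≤ C * (‖r n‖ * c ^ n)) : v = 0 := by
  set ε : ℝ := 1 / (2 * (1 + |c|)) with hεdef
  have hc : 0 ≤ |c| := abs_nonneg c
  have hε : 0 < ε := by positivity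
  have hle : ε * |c| ≤ 1 / 2 := by
    rw [hεdef, div_mul_eq_mul_div, one_mul, div_le_div_iff₀ (by positivity) (by norm_num)]
    nlinarith
  have hlim : Tendsto (fun n : ℕ => C * (‖r n‖ * c ^ n)) atTop (𝓝 0) := by
    apply squeeze_zero_norm' (a := fun n : ℕ => |C| * (1 / 2) ^ n)
    · filter_upwards [rootle hr hε] with n hn
      have h1 : ‖C * (‖r n‖ * c ^ n)‖ = |C| * (‖r n‖ * |c| ^ n) := by
        rw [Real.norm_eq_abs, abs_mul, abs_mul, abs_pow, abs_of_nonneg (norm_nonneg _)]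
      rw [h1]
      have h2 : ‖r n‖ * |c| ^ n ≤ (1 / 2) ^ n := by
        calc ‖r n‖ * |c| ^ n ≤ ε ^ n * |c| ^ n :=
              mul_le_mul_of_nonneg_right hn (by positivity)
          _ = (ε * |c|) ^ n := (mul_pow _ _ _).symm
          _ ≤ (1 / 2) ^ n := pow_le_pow_left₀ (by positivity) hle n
      exact mul_le_mul_of_nonneg_left h2 (abs_nonneg C)
    · have := tendsto_pow_atTop_nhds_zero_of_lt_one (by norm_num : (0:ℝ) ≤ 1/2) (by norm_num)
      simpa using this.const_mul |C|
  have hv : ‖v‖ ≤ 0 := le_of_tendsto_of_tendsto tendsto_const_nhds hlim h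
  simpa using le_antisymm hv (norm_nonneg v)

private lemma qnil_of {z : A}
    (h : ∀ ε : ℝ, 0 < ε → ∀ᶠ n : ℕ in atTop, ‖z ^ n‖ ≤ ε ^ n) :
    Tendsto (fun n : ℕ => ‖z ^ n‖ ^ ((1 : ℝ) / n)) atTop (𝓝 0) := by
  refine tendsto_order.2 ⟨fun l hl => ?_, fun u hu => ?_⟩
  · exact Eventually.of_forall fun n => lt_of_lt_of_le hl (Real.rpow_nonneg (norm_nonneg _) _)
  · have hu2 : 0 < u / 2 := by linarith
    filter_upwards [h (u / 2) hu2, eventually_ge_atTop 1] with n h1 h2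
    have hn : (n : ℝ) ≠ 0 := by positivity
    have hle : ‖z ^ n‖ ^ ((1 : ℝ) / n) ≤ ((u / 2) ^ n) ^ ((1 : ℝ) / n) :=
      Real.rpow_le_rpow (norm_nonneg _) h1 (by positivity)
    have h3 : ((u / 2) ^ n : ℝ) ^ ((1 : ℝ) / n) = u / 2 := by
      rw [← Real.rpow_natCast (u / 2) n, ← Real.rpow_mul hu2.le,
        mul_one_div_cancel hn, Real.rpow_one]
    rw [h3] at hle
    linarith

private lemma rep1 {u v : A} (h : v = u * v ^ 2) : ∀ n : ℕ, v = u ^ n * v ^ (n + 1) := by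
  intro n
  induction n with
  | zero => simp
  | succ n ih =>
    have : u ^ (n + 1) * v ^ (n + 2) = u ^ n * ((u * v ^ 2) * v ^ n) := by
      rw [pow_succ u n, show n + 2 = 2 + n by ring, pow_add v 2 n]
      noncomm_ring
    rw [this, ← h, show u ^ n * (v * v ^ n) = u ^ n * v ^ (n + 1) by rw [← pow_succ' v n]]
    exact ih

private lemma rep2 {u v : A} (h : v = u * v ^ 2) (n : ℕ) :
    u ^ (n + 1) * v ^ (n + 1) = u * v := by
  rw [pow_succ' u n, mul_assoc, ← rep1 h n]

private lemma glim {u x v : A} (hv : v = u * v ^ 2)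
    (hlim : Tendsto (fun n : ℕ => ‖u ^ n - x * u ^ (n + 1)‖ ^ ((1 : ℝ) / n)) atTop (𝓝 0)) :
    x * (u * v) = v := by
  rw [← sub_eq_zero]
  apply vanish hlim _ ‖v‖ ‖v‖
  apply Eventually.of_forall
  intro n
  have key : x * (u * v) - v = -((u ^ n - x * u ^ (n + 1)) * v ^ (n + 1)) := by
    have e1 : x * (u * v) = x * u ^ (n + 1) * v ^ (n + 1) := by
      rw [← rep2 hv n, ← mul_assoc]
    have e2 : v = u ^ n * v ^ (n + 1) := rep1 hv n
    have e3 : -((u ^ n - x * u ^ (n + 1)) * v ^ (n + 1))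
        = x * u ^ (n + 1) * v ^ (n + 1) - u ^ n * v ^ (n + 1) := by
      rw [← neg_mul, neg_sub, sub_mul]
    rw [e3, ← e1, ← e2]
  rw [key, norm_neg]
  calc ‖(u ^ n - x * u ^ (n + 1)) * v ^ (n + 1)‖
      ≤ ‖u ^ n - x * u ^ (n + 1)‖ * ‖v ^ (n + 1)‖ := norm_mul_le _ _
    _ ≤ ‖u ^ n - x * u ^ (n + 1)‖ * ‖v‖ ^ (n + 1) :=
        mul_le_mul_of_nonneg_left (norm_pow_le' v (Nat.succ_pos n)) (norm_nonneg _)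
    _ = ‖v‖ * (‖u ^ n - x * u ^ (n + 1)‖ * ‖v‖ ^ n) := by ring

private lemma glim2 {u x v : A} (hv : v = u * v ^ 2)
    (hlim : Tendsto (fun n : ℕ => ‖u ^ n - x * u ^ (n + 1)‖ ^ ((1 : ℝ) / n)) atTop (𝓝 0)) :
    x * (u * (u * v)) = u * v := by
  rw [← sub_eq_zero]
  apply vanish hlim _ ‖v‖ 1
  have key : ∀ n : ℕ, x * (u * (u * v)) - u * v
      = -((u ^ (n + 1) - x * u ^ (n + 2)) * v ^ (n + 1)) := by
    intro n
    have e1 : x * (u * (u * v)) = x * u ^ (n + 2) * v ^ (n + 1) := by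
      have h4 : u * (u ^ (n + 1) * v ^ (n + 1)) = u ^ (n + 2) * v ^ (n + 1) := by
        rw [← mul_assoc, ← pow_succ' u (n + 1)]
      rw [← rep2 hv n, h4, ← mul_assoc]
    have e2 : u * v = u ^ (n + 1) * v ^ (n + 1) := (rep2 hv n).symm
    have e3 : -((u ^ (n + 1) - x * u ^ (n + 2)) * v ^ (n + 1))
        = x * u ^ (n + 2) * v ^ (n + 1) - u ^ (n + 1) * v ^ (n + 1) := by
      rw [← neg_mul, neg_sub, sub_mul]
    rw [e3, ← e1, ← e2]
  filter_upwards [eventually_ge_atTop 1] with n hn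
  obtain ⟨k, rfl⟩ : ∃ k, n = k + 1 := ⟨n - 1, by omega⟩
  rw [key k, norm_neg, one_mul]
  calc ‖(u ^ (k + 1) - x * u ^ (k + 2)) * v ^ (k + 1)‖
      ≤ ‖u ^ (k + 1) - x * u ^ (k + 2)‖ * ‖v ^ (k + 1)‖ := norm_mul_le _ _
    _ ≤ ‖u ^ (k + 1) - x * u ^ (k + 2)‖ * ‖v‖ ^ (k + 1) :=
        mul_le_mul_of_nonneg_left (norm_pow_le' v (Nat.succ_pos k)) (norm_nonneg _)

private lemma gqnil {u x : A} (h : x = u * x ^ 2)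
    (hlim : Tendsto (fun n : ℕ => ‖u ^ n - x * u ^ (n + 1)‖ ^ ((1 : ℝ) / n)) atTop (𝓝 0)) :
    Tendsto (fun n : ℕ => ‖((1 - u * x) * u * (1 - u * x)) ^ n‖ ^ ((1 : ℝ) / n)) atTop (𝓝 0) := by
  have hxue : x * (u * (u * x)) = u * x := glim2 h hlim
  have heue : (u * x) * u * (u * x) = u * (u * x) := by
    have : (u * x) * u * (u * x) = u * (x * (u * (u * x))) := by
      simp only [mul_assoc]
    rw [this, hxue]
  have hzeq : (1 - u * x) * u * (1 - u * x) = (1 - u * x) * u := by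
    have h0 : (1 - u * x) * u * (u * x) = 0 := by
      rw [sub_mul, sub_mul, one_mul, heue, sub_self]
    rw [mul_sub, mul_one, h0, sub_zero]
  have hpow : ∀ n : ℕ, ((1 - u * x) * u) ^ (n + 1) = (1 - u * x) * u ^ (n + 1) := by
    intro n
    induction n with
    | zero => simp
    | succ n ih =>
      rw [pow_succ' ((1 - u * x) * u) (n + 1), ih, ← mul_assoc, hzeq, mul_assoc,
        ← pow_succ' u (n + 1)]
  have hval : ∀ n : ℕ, ((1 - u * x) * u * (1 - u * x)) ^ (n + 1)
      = u * (u ^ n - x * u ^ (n + 1)) := by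
    intro n
    rw [hzeq, hpow n, sub_mul, one_mul, mul_assoc, mul_sub, ← pow_succ' u n]
  apply qnil_of
  intro ε hε
  have hbig : ∀ᶠ n : ℕ in atTop, ‖u‖ ≤ ε * 2 ^ n := by
    have h2 : Tendsto (fun n : ℕ => (2:ℝ) ^ n) atTop atTop :=
      tendsto_pow_atTop_atTop_of_one_lt one_lt_two
    exact (h2.const_mul_atTop hε).eventually_ge_atTop ‖u‖
  have hmain : ∀ᶠ n : ℕ in atTop,
      ‖((1 - u * x) * u * (1 - u * x)) ^ (n + 1)‖ ≤ ε ^ (n + 1) := by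
    filter_upwards [rootle hlim (by positivity : (0:ℝ) < ε / 2), hbig] with n h1 h2
    calc ‖((1 - u * x) * u * (1 - u * x)) ^ (n + 1)‖
        = ‖u * (u ^ n - x * u ^ (n + 1))‖ := by rw [hval n]
      _ ≤ ‖u‖ * ‖u ^ n - x * u ^ (n + 1)‖ := norm_mul_le _ _
      _ ≤ (ε * 2 ^ n) * (ε / 2) ^ n :=
          mul_le_mul h2 h1 (norm_nonneg _) (by positivity)
      _ = ε ^ (n + 1) := by
          rw [mul_assoc, ← mul_pow, show (2:ℝ) * (ε / 2) = ε by ring, ← pow_succ' ε n]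
  obtain ⟨N, hN⟩ := eventually_atTop.1 hmain
  rw [eventually_atTop]
  refine ⟨N + 1, fun m hm => ?_⟩
  obtain ⟨k, rfl⟩ : ∃ k, m = k + 1 := ⟨m - 1, by omega⟩
  exact hN k (by omega)

end Helpers

theorem stmt17 (a b ag bg : A) (ha : IsGCEP a ag) (hb : IsGCEP b bg)
    (h1 : a * ag = b * ag) (h2 : ag * a = ag * b) :
    ∃ e2 : A, e2 * e2 = e2 ∧ star e2 = e2 ∧
      (a * ag) * e2 = 0 ∧ e2 * (a * ag) = 0 ∧
      (let e1 : A := a * ag; let e3 : A := 1 - e1 - e2;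
        e1 * a * e1 = e1 * b * e1 ∧ e1 * a * e2 = e1 * b * e2 ∧
        e1 * a * e3 = e1 * b * e3 ∧
        e2 * b * e1 = 0 ∧ e3 * b * e1 = 0 ∧ e3 * b * e2 = 0 ∧
        (∃ w : A, e1 * w * e1 = w ∧ (e1 * b * e1) * w = e1 ∧ w * (e1 * b * e1) = e1) ∧
        (∃ w : A, e2 * w * e2 = w ∧ (e2 * b * e2) * w = e2 ∧ w * (e2 * b * e2) = e2) ∧
        IsQNil ((1 - e1) * a * (1 - e1)) ∧ IsQNil (e3 * b * e3)) := by
  obtain ⟨ha1, ha2, ha3⟩ := ha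
  obtain ⟨hb1, hb2, hb3⟩ := hb
  obtain ⟨e, he⟩ : ∃ x : A, x = a * ag := ⟨_, rfl⟩
  obtain ⟨f, hf⟩ : ∃ x : A, x = b * bg := ⟨_, rfl⟩
  rw [← he] at ha2
  rw [← hf] at hb2
  rw [← he] at h1
  rw [← he]
  -- basic facts
  have hab : a * ag = b * ag := he ▸ h1
  have hba : ag = b * ag ^ 2 := by
    calc ag = a * ag ^ 2 := ha1
      _ = (a * ag) * ag := by rw [sq, mul_assoc]
      _ = (b * ag) * ag := by rw [hab]
      _ = b * ag ^ 2 := by rw [mul_assoc, ← sq]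
  have age : ag * e = ag := by rw [he]; exact glim ha1 ha3
  have agae : ag * (a * e) = e := by rw [he]; exact glim2 ha1 ha3
  have bgf : bg * f = bg := by rw [hf]; exact glim hb1 hb3
  have bgbf : bg * (b * f) = f := by rw [hf]; exact glim2 hb1 hb3
  have bge : bg * e = ag := by rw [h1]; exact glim hba hb3
  have bgbe : bg * (b * e) = e := by rw [h1]; exact glim2 hba hb3
  have ee : e * e = e := by rw [he, mul_assoc, glim ha1 ha3]
  have ff : f * f = f := by rw [hf, mul_assoc, glim hb1 hb3]
  have eag : e * ag = ag := by rw [he, mul_assoc, ← sq, ← ha1]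
  have fbg : f * bg = bg := by rw [hf, mul_assoc, ← sq, ← hb1]
  have fe : f * e = e := by rw [hf, mul_assoc, bge, ← h1]
  have ef : e * f = e := by
    have := congrArg star fe
    rwa [star_mul, ha2, hb2] at this
  have fag : f * ag = ag := by rw [← bge, ← mul_assoc, fbg]
  have heb : e * b = e * a := by rw [he, mul_assoc, mul_assoc, ← h2]
  have heba : ∀ X : A, e * (b * X) = e * (a * X) := fun X => by
    rw [← mul_assoc, ← mul_assoc, heb]
  have agbe : ag * (b * e) = e := by
    rw [← mul_assoc, ← h2, mul_assoc]; exact agae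
  have hbag : b * ag = e := h1.symm
  have hbbg : b * bg = f := hf.symm
  have ebe : e * (b * e) = b * e := by
    calc e * (b * e) = (b * ag) * (b * e) := by rw [hbag]
      _ = b * (ag * (b * e)) := mul_assoc _ _ _
      _ = b * e := by rw [agbe]
  have fbe : f * (b * e) = b * e := by
    calc f * (b * e) = (b * bg) * (b * e) := by rw [hbbg]
      _ = b * (bg * (b * e)) := mul_assoc _ _ _
      _ = b * e := by rw [bgbe]
  have fbf : f * (b * f) = b * f := by
    calc f * (b * f) = (b * bg) * (b * f) := by rw [hbbg]
      _ = b * (bg * (b * f)) := mul_assoc _ _ _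
      _ = b * f := by rw [bgbf]
  -- lifted facts
  have ee' : ∀ X : A, e * (e * X) = e * X := fun X => by rw [← mul_assoc, ee]
  have ef' : ∀ X : A, e * (f * X) = e * X := fun X => by rw [← mul_assoc, ef]
  have fe' : ∀ X : A, f * (e * X) = e * X := fun X => by rw [← mul_assoc, fe]
  have ff' : ∀ X : A, f * (f * X) = f * X := fun X => by rw [← mul_assoc, ff]
  have eag' : ∀ X : A, e * (ag * X) = ag * X := fun X => by rw [← mul_assoc, eag]
  have fag' : ∀ X : A, f * (ag * X) = ag * X := fun X => by rw [← mul_assoc, fag]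
  have age' : ∀ X : A, ag * (e * X) = ag * X := fun X => by rw [← mul_assoc, age]
  have bge' : ∀ X : A, bg * (e * X) = ag * X := fun X => by rw [← mul_assoc, bge]
  have bgf' : ∀ X : A, bg * (f * X) = bg * X := fun X => by rw [← mul_assoc, bgf]
  have fbg' : ∀ X : A, f * (bg * X) = bg * X := fun X => by rw [← mul_assoc, fbg]
  have ebe' : ∀ X : A, e * (b * (e * X)) = b * (e * X) := fun X => by
    rw [← mul_assoc b e X, ← mul_assoc e (b * e) X, ebe, mul_assoc]
  have fbe' : ∀ X : A, f * (b * (e * X)) = b * (e * X) := fun X => by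
    rw [← mul_assoc b e X, ← mul_assoc f (b * e) X, fbe, mul_assoc]
  have fbf' : ∀ X : A, f * (b * (f * X)) = b * (f * X) := fun X => by
    rw [← mul_assoc b f X, ← mul_assoc f (b * f) X, fbf, mul_assoc]
  have bgbe' : ∀ X : A, bg * (b * (e * X)) = e * X := fun X => by
    rw [← mul_assoc b e X, ← mul_assoc bg (b * e) X, bgbe]
  have bgbf' : ∀ X : A, bg * (b * (f * X)) = f * X := fun X => by
    rw [← mul_assoc b f X, ← mul_assoc bg (b * f) X, bgbf]
  have hbbg' : ∀ X : A, b * (bg * X) = f * X := fun X => by rw [← mul_assoc, hbbg]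
  -- qnil facts
  have qa : IsQNil ((1 - e) * a * (1 - e)) := by rw [he]; exact gqnil ha1 ha3
  have qb : IsQNil ((1 - f) * b * (1 - f)) := by rw [hf]; exact gqnil hb1 hb3
  refine ⟨f - e, ?_, ?_, ?_, ?_, ?_⟩
  · simp only [sub_mul, mul_sub, ff, fe, ef, ee]; abel
  · rw [star_sub, ha2, hb2]
  · rw [mul_sub, ef, ee, sub_self]
  · rw [sub_mul, fe, ee, sub_self]
  show e * a * e = e * b * e ∧
      e * a * (f - e) = e * b * (f - e) ∧
      e * a * (1 - e - (f - e)) = e * b * (1 - e - (f - e)) ∧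
      (f - e) * b * e = 0 ∧ (1 - e - (f - e)) * b * e = 0 ∧
      (1 - e - (f - e)) * b * (f - e) = 0 ∧
      (∃ w : A, e * w * e = w ∧ (e * b * e) * w = e ∧ w * (e * b * e) = e) ∧
      (∃ w : A, (f - e) * w * (f - e) = w ∧ ((f - e) * b * (f - e)) * w = f - e ∧
        w * ((f - e) * b * (f - e)) = f - e) ∧
      IsQNil ((1 - e) * a * (1 - e)) ∧
      IsQNil ((1 - e - (f - e)) * b * (1 - e - (f - e)))
  refine ⟨?_, ?_, ?_, ?_, ?_, ?_, ⟨ag, ?_, ?_, ?_⟩, ⟨(f - e) * bg, ?_, ?_, ?_⟩, qa, ?_⟩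
  · rw [mul_assoc e a e, mul_assoc e b e, heba]
  · rw [mul_assoc e a (f - e), mul_assoc e b (f - e), heba]
  · rw [mul_assoc e a (1 - e - (f - e)), mul_assoc e b (1 - e - (f - e)), heba]
  · simp only [sub_mul, mul_assoc, fbe, ebe, sub_self]
  · simp only [sub_mul, one_mul, mul_assoc, fbe, ebe]; abel
  · simp only [sub_mul, mul_sub, one_mul, mul_assoc, fbf, fbe, ebe]; abel
  · rw [eag, age]
  · simp only [mul_assoc, eag, hbag, ee]
  · simp only [mul_assoc, age', agbe]
  · simp only [sub_mul, mul_sub, mul_assoc, bgf, bge, fbg, fag, eag, ff', fe', ef', ee',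
      fag', eag']
    abel
  · simp only [sub_mul, mul_sub, mul_assoc, hbbg, hbbg', fbg, ff, fe, ef, ee, ff', fe', ef',
      ee', fbe', ebe', fbf', fbf, fbe, ebe]
    abel
  · simp only [sub_mul, mul_sub, mul_assoc, bgf', bge', bgbf', bgbe', bgbf, bgbe, bgf, bge,
      fbf, fbe, ebe, agbe, fag', eag', fag, eag, ff, fe, ef, ee]
    abel
  · rw [show (1 : A) - e - (f - e) = 1 - f from by abel]
    exact qb
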